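/- (Conditional-on-covariates identification of the CLATE numerator and denominator.) Let T be a measurable space, f : S → T measurable, and V := f ∘ X. Under unconfoundedness, positivity, and monotonicity, the following hold P-almost surely: E[m1(X) − m0(X) | σ(V)] = E[(Y1 − Y0)·1{A1 > A0} | σ(V)] and E[ℓ1(X) − ℓ0(X) | σ(V)] = P(A1 > A0 | σ(V)), where σ(V) is the σ-algebra generated by V. -/

import Mathlib

open MeasureTheory ProbabilityTheory Filter

section AuxCLATE

set_option linter.unusedSectionVars false

lemma clate_nonempty {Ω : Type*} [MeasurableSpace Ω] (P : Measure Ω)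
    [IsProbabilityMeasure P] : Nonempty Ω := by
  by_contra h
  rw [not_nonempty_iff] at h
  have h1 : P Set.univ = 1 := measure_univ
  rw [Set.univ_eq_empty_iff.mpr h, measure_empty] at h1
  exact zero_ne_one h1

lemma clate_abs_clamp_le {t n : ℝ} (hn : 0 ≤ n) : |max (-n) (min n t)| ≤ |t| := by
  rcases le_total 0 t with h | h
  · rw [max_eq_right (le_trans (neg_nonpos.mpr hn) (le_min hn h)),
      abs_of_nonneg (le_min hn h), abs_of_nonneg h]
    exact min_le_right _ _
  · rw [min_eq_right (h.trans hn), abs_of_nonpos (max_le (neg_nonpos.mpr hn) h),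
      abs_of_nonpos h]
    exact neg_le_neg (le_max_right _ _)

lemma clate_abs_clamp_le_bound (t : ℝ) {n : ℝ} (hn : 0 ≤ n) : |max (-n) (min n t)| ≤ n :=
  abs_le.mpr ⟨le_max_left _ _, max_le (by linarith) (min_le_left _ _)⟩

variable {Ω : Type*} [MeasurableSpace Ω] {P : Measure Ω} [IsProbabilityMeasure P]

lemma clate_intble {h : Ω → ℝ} (hm : Measurable h) {C : ℝ} (hb : ∀ ω, |h ω| ≤ C) :
    Integrable h P :=
  ⟨hm.aestronglyMeasurable, HasFiniteIntegral.of_bounded (C := C)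
    (ae_of_all _ fun ω => by simpa [Real.norm_eq_abs] using hb ω)⟩

lemma clate_int_mul {u v : Ω → ℝ} (hu : Integrable u P) (hv : Measurable v) {Cv : ℝ}
    (hvb : ∀ ω, |v ω| ≤ Cv) : Integrable (fun ω => u ω * v ω) P := by
  refine Integrable.mono' (hu.abs.const_mul Cv)
    (hu.1.mul hv.aestronglyMeasurable) (ae_of_all _ fun ω => ?_)
  rw [Real.norm_eq_abs, abs_mul, mul_comm]
  exact mul_le_mul_of_nonneg_right (hvb ω) (abs_nonneg _)

lemma clate_trunc_tendsto {W φ : Ω → ℝ} (hW : Measurable W) (hWb : ∀ ω, |W ω| ≤ 1)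
    (hφ : Measurable φ) (hint : Integrable φ P) :
    Tendsto (fun n : ℕ => ∫ ω, W ω * max (-(n : ℝ)) (min (n : ℝ) (φ ω)) ∂P) atTop
      (nhds (∫ ω, W ω * φ ω ∂P)) := by
  apply tendsto_integral_of_dominated_convergence (fun ω => |φ ω|)
  · intro n
    exact (hW.mul (measurable_const.max (measurable_const.min hφ))).aestronglyMeasurable
  · exact hint.abs
  · intro n
    refine ae_of_all _ fun ω => ?_
    rw [Real.norm_eq_abs, abs_mul]
    calc |W ω| * |max (-(n : ℝ)) (min (n : ℝ) (φ ω))|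
        ≤ 1 * |φ ω| :=
          mul_le_mul (hWb ω) (clate_abs_clamp_le (Nat.cast_nonneg n)) (abs_nonneg _)
            zero_le_one
      _ = |φ ω| := one_mul _
  · refine ae_of_all _ fun ω => ?_
    obtain ⟨N, hN⟩ := exists_nat_ge |φ ω|
    apply Tendsto.congr' _ tendsto_const_nhds
    filter_upwards [eventually_ge_atTop N] with n hn
    have h1 : |φ ω| ≤ (n : ℝ) := hN.trans (Nat.cast_le.mpr hn)
    rw [min_eq_right (le_trans (le_abs_self _) h1),
      max_eq_right (by linarith [neg_abs_le (φ ω)])]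

lemma clate_ext {W1 W2 φ : Ω → ℝ} (hW1 : Measurable W1) (hW1b : ∀ ω, |W1 ω| ≤ 1)
    (hW2 : Measurable W2) (hW2b : ∀ ω, |W2 ω| ≤ 1)
    (hφ : Measurable φ) (hint : Integrable φ P)
    (h : ∀ n : ℕ, ∫ ω, W1 ω * max (-(n : ℝ)) (min (n : ℝ) (φ ω)) ∂P
        = ∫ ω, W2 ω * max (-(n : ℝ)) (min (n : ℝ) (φ ω)) ∂P) :
    ∫ ω, W1 ω * φ ω ∂P = ∫ ω, W2 ω * φ ω ∂P :=
  tendsto_nhds_unique (clate_trunc_tendsto hW1 hW1b hφ hint)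
    ((clate_trunc_tendsto hW2 hW2b hφ hint).congr fun n => (h n).symm)

lemma clate_integrable_of_trunc {u : Ω → ℝ} (hu : Measurable u) {K : ℝ}
    (h : ∀ n : ℕ, ∫ ω, (if |u ω| ≤ (n : ℝ) then |u ω| else 0) ∂P ≤ K) :
    Integrable u P := by
  have hmeas : ∀ n : ℕ, Measurable (fun ω => if |u ω| ≤ (n : ℝ) then |u ω| else 0) :=
    fun n => Measurable.ite (measurableSet_le hu.abs measurable_const) hu.abs measurable_const
  have hnn : ∀ (n : ℕ) ω, 0 ≤ (if |u ω| ≤ (n : ℝ) then |u ω| else 0) := by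
    intro n ω; split_ifs; exacts [abs_nonneg _, le_refl 0]
  have hintn : ∀ n : ℕ, Integrable (fun ω => if |u ω| ≤ (n : ℝ) then |u ω| else 0) P := by
    intro n
    refine clate_intble (hmeas n) (C := (n : ℝ)) fun ω => ?_
    split_ifs with h'
    · rwa [abs_abs]
    · simpa using (Nat.cast_nonneg n : (0:ℝ) ≤ n)
  have key : ∀ n : ℕ, ∫⁻ ω, ENNReal.ofReal (if |u ω| ≤ (n : ℝ) then |u ω| else 0) ∂P
      ≤ ENNReal.ofReal K := by
    intro n
    rw [← ofReal_integral_eq_lintegral_ofReal (hintn n) (ae_of_all _ (hnn n))]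
    exact ENNReal.ofReal_le_ofReal (h n)
  refine ⟨hu.aestronglyMeasurable, ?_⟩
  rw [hasFiniteIntegral_iff_norm]
  have hsup : ∀ ω, ENNReal.ofReal ‖u ω‖
      = ⨆ n : ℕ, ENNReal.ofReal (if |u ω| ≤ (n : ℝ) then |u ω| else 0) := by
    intro ω
    apply le_antisymm
    · obtain ⟨N, hN⟩ := exists_nat_ge |u ω|
      refine le_iSup_of_le N ?_
      rw [if_pos hN, Real.norm_eq_abs]
    · refine iSup_le fun n => ENNReal.ofReal_le_ofReal ?_
      rw [Real.norm_eq_abs]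
      split_ifs <;> simp [abs_nonneg]
  have hmono : Monotone (fun (n : ℕ) ω => ENNReal.ofReal
      (if |u ω| ≤ (n : ℝ) then |u ω| else 0)) := by
    intro n m hnm ω
    apply ENNReal.ofReal_le_ofReal
    by_cases h' : |u ω| ≤ (n : ℝ)
    · rw [if_pos h', if_pos (h'.trans (Nat.cast_le.mpr hnm))]
    · rw [if_neg h']
      exact hnn m ω
  calc ∫⁻ ω, ENNReal.ofReal ‖u ω‖ ∂P
      = ∫⁻ ω, ⨆ n : ℕ, ENNReal.ofReal (if |u ω| ≤ (n : ℝ) then |u ω| else 0) ∂P :=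
        lintegral_congr hsup
    _ = ⨆ n : ℕ, ∫⁻ ω, ENNReal.ofReal (if |u ω| ≤ (n : ℝ) then |u ω| else 0) ∂P :=
        lintegral_iSup (fun n => (hmeas n).ennreal_ofReal) hmono
    _ ≤ ENNReal.ofReal K := iSup_le key
    _ < ⊤ := ENNReal.ofReal_lt_top

end AuxCLATE

lemma clate_master {Ω S : Type*} [MeasurableSpace Ω] [MeasurableSpace S]
    (P : Measure Ω) [IsProbabilityMeasure P]
    (X : Ω → S) (hX : Measurable X)
    (W : Ω → ℝ) (hW : Measurable W) (hWb : ∀ ω, |W ω| ≤ 1)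
    (p : S → ℝ) (hp : Measurable p)
    (ε : ℝ) (hε : 0 < ε) (hpbd : ∀ x, ε ≤ p x ∧ p x ≤ 1)
    (hWp : ∀ g : S → ℝ, Measurable g → (∃ C, ∀ x, |g x| ≤ C) →
      ∫ ω, W ω * g (X ω) ∂P = ∫ ω, p (X ω) * g (X ω) ∂P)
    (ψ : Ω → ℝ) (hψ : Measurable ψ)
    (hWψ : ∀ g : S → ℝ, Measurable g → (∃ C, ∀ x, |g x| ≤ C) →
      ∫ ω, W ω * ψ ω * g (X ω) ∂P = ∫ ω, p (X ω) * ψ ω * g (X ω) ∂P)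
    (R : Ω → ℝ) (hR : Measurable R) (CR : ℝ) (hRb : ∀ ω, |R ω| ≤ CR)
    (hWR : ∀ ω, W ω * R ω = W ω * ψ ω)
    (q : S → ℝ) (hq : Measurable q)
    (hqv : ∀ g : S → ℝ, Measurable g → (∃ C, ∀ x, |g x| ≤ C) →
      ∫ ω, R ω * W ω * g (X ω) ∂P = ∫ ω, q (X ω) * W ω * g (X ω) ∂P) :
    Integrable (fun ω => q (X ω)) P ∧
      ∀ g : S → ℝ, Measurable g → (∃ C, ∀ x, |g x| ≤ C) →
        ∫ ω, q (X ω) * g (X ω) ∂P = ∫ ω, ψ ω * g (X ω) ∂P := by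
  haveI : Nonempty Ω := clate_nonempty P
  have hqX : Measurable fun ω => q (X ω) := hq.comp hX
  have hCR : 0 ≤ CR := le_trans (abs_nonneg _) (hRb (Classical.arbitrary Ω))
  have hpne : ∀ x, p x ≠ 0 := fun x => (hε.trans_le (hpbd x).1).ne'
  have hpXb : ∀ ω, |p (X ω)| ≤ 1 := by
    intro ω
    rw [abs_of_pos (hε.trans_le (hpbd (X ω)).1)]
    exact (hpbd (X ω)).2
  -- integrability of q ∘ X
  have hint : Integrable (fun ω => q (X ω)) P := by
    apply clate_integrable_of_trunc (P := P) hqX (K := CR / ε)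
    intro n
    set gn : S → ℝ := fun x => if |q x| ≤ (n : ℝ) then (if q x < 0 then -1 else 1) else 0
      with hgn
    set tn : S → ℝ := fun x => if |q x| ≤ (n : ℝ) then |q x| else 0 with htn
    have hgnm : Measurable gn :=
      Measurable.ite (measurableSet_le hq.abs measurable_const)
        (Measurable.ite (measurableSet_lt hq measurable_const) measurable_const
          measurable_const) measurable_const
    have hgnb : ∀ x, |gn x| ≤ 1 := by
      intro x; simp only [hgn]; split_ifs <;> simp
    have htnm : Measurable tn :=
      Measurable.ite (measurableSet_le hq.abs measurable_const) hq.abs measurable_const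
    have htnb : ∀ x, |tn x| ≤ (n : ℝ) := by
      intro x; simp only [htn]; split_ifs with h'
      · rwa [abs_abs]
      · simpa using (Nat.cast_nonneg n : (0:ℝ) ≤ n)
    have htnn : ∀ x, 0 ≤ tn x := by
      intro x; simp only [htn]; split_ifs; exacts [abs_nonneg _, le_refl 0]
    have e1 : ∫ ω, R ω * W ω * gn (X ω) ∂P = ∫ ω, q (X ω) * W ω * gn (X ω) ∂P :=
      hqv gn hgnm ⟨1, hgnb⟩
    have e2 : (fun ω => q (X ω) * W ω * gn (X ω)) = fun ω => W ω * tn (X ω) := by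
      funext ω
      simp only [hgn, htn]
      split_ifs with h1 h2
      · rw [abs_of_neg h2]; ring
      · rw [abs_of_nonneg (not_lt.mp h2)]; ring
      · ring
    have e3 : ∫ ω, W ω * tn (X ω) ∂P = ∫ ω, p (X ω) * tn (X ω) ∂P :=
      hWp tn htnm ⟨n, htnb⟩
    have iRWg : Integrable (fun ω => R ω * W ω * gn (X ω)) P := by
      refine clate_intble ((hR.mul hW).mul (hgnm.comp hX)) (C := CR) fun ω => ?_
      rw [abs_mul, abs_mul]
      calc |R ω| * |W ω| * |gn (X ω)|
          ≤ CR * 1 * 1 :=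
            mul_le_mul (mul_le_mul (hRb ω) (hWb ω) (abs_nonneg _) hCR) (hgnb _)
              (abs_nonneg _) (by positivity)
        _ = CR := by ring
    have e4 : ∫ ω, R ω * W ω * gn (X ω) ∂P ≤ CR := by
      calc ∫ ω, R ω * W ω * gn (X ω) ∂P
          ≤ ∫ _ω, CR ∂P := by
            refine integral_mono iRWg (integrable_const CR) fun ω => ?_
            calc R ω * W ω * gn (X ω) ≤ |R ω * W ω * gn (X ω)| := le_abs_self _
              _ = |R ω| * |W ω| * |gn (X ω)| := by rw [abs_mul, abs_mul]
              _ ≤ CR * 1 * 1 :=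
                  mul_le_mul (mul_le_mul (hRb ω) (hWb ω) (abs_nonneg _) hCR) (hgnb _)
                    (abs_nonneg _) (by positivity)
              _ = CR := by ring
        _ = CR := by simp
    have htInt : Integrable (fun ω => tn (X ω)) P :=
      clate_intble (htnm.comp hX) (C := (n : ℝ)) fun ω => htnb (X ω)
    have e5 : ε * ∫ ω, tn (X ω) ∂P ≤ ∫ ω, p (X ω) * tn (X ω) ∂P := by
      rw [← integral_const_mul]
      refine integral_mono (htInt.const_mul ε)
        (clate_intble ((hp.comp hX).mul (htnm.comp hX)) (C := 1 * (n : ℝ)) fun ω => ?_)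
        fun ω => ?_
      · rw [abs_mul]
        exact mul_le_mul (hpXb ω) (htnb _) (abs_nonneg _) zero_le_one
      · exact mul_le_mul_of_nonneg_right (hpbd (X ω)).1 (htnn _)
    have hfin : ∫ ω, tn (X ω) ∂P ≤ CR / ε := by
      rw [le_div_iff₀ hε]
      calc (∫ ω, tn (X ω) ∂P) * ε = ε * ∫ ω, tn (X ω) ∂P := by ring
        _ ≤ ∫ ω, p (X ω) * tn (X ω) ∂P := e5
        _ = ∫ ω, W ω * tn (X ω) ∂P := e3.symm
        _ = ∫ ω, q (X ω) * W ω * gn (X ω) ∂P := by rw [e2]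
        _ = ∫ ω, R ω * W ω * gn (X ω) ∂P := e1.symm
        _ ≤ CR := e4
    simpa only [htn] using hfin
  refine ⟨hint, fun g hg hgb => ?_⟩
  obtain ⟨Cg, hCg⟩ := hgb
  have hCg0 : 0 ≤ Cg := (abs_nonneg _).trans (hCg (X (Classical.arbitrary Ω)))
  set h : S → ℝ := fun x => g x / p x with hh
  have hhm : Measurable h := hg.div hp
  have hhb : ∀ x, |h x| ≤ Cg / ε := by
    intro x
    simp only [hh, abs_div]
    exact div_le_div₀ hCg0 (hCg x) hε
      (by rw [abs_of_pos (hε.trans_le (hpbd x).1)]; exact (hpbd x).1)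
  have hφm : Measurable fun ω => q (X ω) * h (X ω) := hqX.mul (hhm.comp hX)
  have hφint : Integrable (fun ω => q (X ω) * h (X ω)) P :=
    clate_int_mul hint (hhm.comp hX) fun ω => hhb (X ω)
  calc ∫ ω, q (X ω) * g (X ω) ∂P
      = ∫ ω, p (X ω) * (q (X ω) * h (X ω)) ∂P := by
        refine integral_congr_ae (ae_of_all _ fun ω => ?_)
        simp only [hh]
        field_simp
        rw [mul_div_assoc, div_self (hpne (X ω)), mul_one]
    _ = ∫ ω, W ω * (q (X ω) * h (X ω)) ∂P := by
        refine clate_ext (P := P) (W1 := fun ω => p (X ω)) (W2 := W)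
          (φ := fun ω => q (X ω) * h (X ω)) (hp.comp hX) hpXb hW hWb hφm hφint fun n => ?_
        exact (hWp (fun x => max (-(n : ℝ)) (min (n : ℝ) (q x * h x)))
          (measurable_const.max (measurable_const.min (hq.mul hhm)))
          ⟨n, fun x => clate_abs_clamp_le_bound _ (Nat.cast_nonneg n)⟩).symm
    _ = ∫ ω, q (X ω) * W ω * h (X ω) ∂P := by
        congr 1; funext ω; ring
    _ = ∫ ω, R ω * W ω * h (X ω) ∂P := (hqv h hhm ⟨Cg / ε, hhb⟩).symm
    _ = ∫ ω, W ω * ψ ω * h (X ω) ∂P := by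
        congr 1; funext ω; rw [mul_comm (R ω) (W ω), hWR ω]
    _ = ∫ ω, p (X ω) * ψ ω * h (X ω) ∂P := hWψ h hhm ⟨Cg / ε, hhb⟩
    _ = ∫ ω, ψ ω * g (X ω) ∂P := by
        refine integral_congr_ae (ae_of_all _ fun ω => ?_)
        simp only [hh]
        rw [mul_right_comm, mul_comm (p (X ω)) (g (X ω) / p (X ω)),
          div_mul_cancel₀ _ (hpne (X ω))]
        ring

/-- conditional-on-covariates identification of the CLATE numerator and
denominator: with V := f ∘ X, P-a.s.
E[m1(X) − m0(X) | σ(V)] = E[(Y1 − Y0)·1{A1 > A0} | σ(V)] and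
E[ℓ1(X) − ℓ0(X) | σ(V)] = P(A1 > A0 | σ(V)). -/
theorem stmt_18
    {Ω : Type*} [MeasurableSpace Ω] (P : Measure Ω) [IsProbabilityMeasure P]
    {S : Type*} [mS : MeasurableSpace S]
    {T : Type*} [mT : MeasurableSpace T]
    (X : Ω → S) (hX : Measurable X)
    (f : S → T) (hf : Measurable f)
    (Z A0 A1 Y0 Y1 : Ω → ℝ)
    (hZ : Measurable Z) (hA0 : Measurable A0) (hA1 : Measurable A1)
    (hY0 : Measurable Y0) (hY1 : Measurable Y1)
    (hZ01 : ∀ ω, Z ω = 0 ∨ Z ω = 1)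
    (hA0_01 : ∀ ω, A0 ω = 0 ∨ A0 ω = 1)
    (hA1_01 : ∀ ω, A1 ω = 0 ∨ A1 ω = 1)
    (hY0b : ∃ C, ∀ ω, |Y0 ω| ≤ C) (hY1b : ∃ C, ∀ ω, |Y1 ω| ≤ C)
    (A Y : Ω → ℝ)
    (hA : A = fun ω => (1 - Z ω) * A0 ω + Z ω * A1 ω)
    (hY : Y = fun ω => (1 - A ω) * Y0 ω + A ω * Y1 ω)
    (e : S → ℝ) (he : Measurable e) (ε : ℝ) (hε : 0 < ε) (hε2 : ε < 1/2)
    (hebd : ∀ x, ε ≤ e x ∧ e x ≤ 1 - ε)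
    (hVe : ∀ g : S → ℝ, Measurable g → (∃ C, ∀ x, |g x| ≤ C) →
      ∫ ω, Z ω * g (X ω) ∂P = ∫ ω, e (X ω) * g (X ω) ∂P)
    (hUnconf : ∀ ψ : ℝ × ℝ × ℝ × ℝ → ℝ, Measurable ψ → (∃ C, ∀ v, |ψ v| ≤ C) →
      ∀ g : S → ℝ, Measurable g → (∃ C, ∀ x, |g x| ≤ C) →
      ∫ ω, Z ω * ψ (A0 ω, A1 ω, Y0 ω, Y1 ω) * g (X ω) ∂P
        = ∫ ω, e (X ω) * ψ (A0 ω, A1 ω, Y0 ω, Y1 ω) * g (X ω) ∂P)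
    (m0 m1 l0 l1 : S → ℝ)
    (hm0 : Measurable m0) (hm1 : Measurable m1)
    (hl0 : Measurable l0) (hl1 : Measurable l1)
    (hm0v : ∀ g : S → ℝ, Measurable g → (∃ C, ∀ x, |g x| ≤ C) →
      ∫ ω, Y ω * (if Z ω = 0 then (1:ℝ) else 0) * g (X ω) ∂P
        = ∫ ω, m0 (X ω) * (if Z ω = 0 then (1:ℝ) else 0) * g (X ω) ∂P)
    (hm1v : ∀ g : S → ℝ, Measurable g → (∃ C, ∀ x, |g x| ≤ C) →
      ∫ ω, Y ω * (if Z ω = 1 then (1:ℝ) else 0) * g (X ω) ∂P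
        = ∫ ω, m1 (X ω) * (if Z ω = 1 then (1:ℝ) else 0) * g (X ω) ∂P)
    (hl0v : ∀ g : S → ℝ, Measurable g → (∃ C, ∀ x, |g x| ≤ C) →
      ∫ ω, A ω * (if Z ω = 0 then (1:ℝ) else 0) * g (X ω) ∂P
        = ∫ ω, l0 (X ω) * (if Z ω = 0 then (1:ℝ) else 0) * g (X ω) ∂P)
    (hl1v : ∀ g : S → ℝ, Measurable g → (∃ C, ∀ x, |g x| ≤ C) →
      ∫ ω, A ω * (if Z ω = 1 then (1:ℝ) else 0) * g (X ω) ∂P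
        = ∫ ω, l1 (X ω) * (if Z ω = 1 then (1:ℝ) else 0) * g (X ω) ∂P)
    (hMono : P {ω | A0 ω ≤ A1 ω} = 1) :
    (P[fun ω => m1 (X ω) - m0 (X ω) | MeasurableSpace.comap (fun ω => f (X ω)) mT]
      =ᵐ[P]
        P[Set.indicator {ω | A1 ω = 1 ∧ A0 ω = 0} (fun ω => Y1 ω - Y0 ω)
          | MeasurableSpace.comap (fun ω => f (X ω)) mT])
    ∧ (P[fun ω => l1 (X ω) - l0 (X ω) | MeasurableSpace.comap (fun ω => f (X ω)) mT]
      =ᵐ[P]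
        P[Set.indicator {ω | A1 ω = 1 ∧ A0 ω = 0} (fun _ => (1:ℝ))
          | MeasurableSpace.comap (fun ω => f (X ω)) mT]) := by
  classical
  haveI : Nonempty Ω := clate_nonempty P
  obtain ⟨C0, hC0⟩ := hY0b
  obtain ⟨C1, hC1⟩ := hY1b
  set C : ℝ := max (max C0 C1) 1 with hCdef
  have hCpos : (0:ℝ) < C := lt_of_lt_of_le one_pos (le_max_right _ _)
  have hY0C : ∀ ω, |Y0 ω| ≤ C :=
    fun ω => (hC0 ω).trans ((le_max_left C0 C1).trans (le_max_left _ 1))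
  have hY1C : ∀ ω, |Y1 ω| ≤ C :=
    fun ω => (hC1 ω).trans ((le_max_right C0 C1).trans (le_max_left _ 1))
  have hZb : ∀ ω, |Z ω| ≤ 1 := by intro ω; rcases hZ01 ω with h | h <;> simp [h]
  have h1Zb : ∀ ω, |1 - Z ω| ≤ 1 := by intro ω; rcases hZ01 ω with h | h <;> simp [h]
  have hA01 : ∀ ω, A ω = 0 ∨ A ω = 1 := by
    intro ω; rw [hA]
    rcases hZ01 ω with h | h <;> rcases hA0_01 ω with h0 | h0 <;>
      rcases hA1_01 ω with h1 | h1 <;> simp [h, h0, h1]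
  have hAb : ∀ ω, |A ω| ≤ 1 := by intro ω; rcases hA01 ω with h | h <;> simp [h]
  have hAm : Measurable A := by
    rw [hA]; exact ((measurable_const.sub hZ).mul hA0).add (hZ.mul hA1)
  have hYm : Measurable Y := by
    rw [hY]; exact ((measurable_const.sub hAm).mul hY0).add (hAm.mul hY1)
  have hYb : ∀ ω, |Y ω| ≤ C := by
    intro ω
    rcases hA01 ω with h | h <;> simp only [hY, h] <;> norm_num
    · exact hY0C ω
    · exact hY1C ω
  have heXb : ∀ ω, |e (X ω)| ≤ 1 := by
    intro ω
    rw [abs_of_pos (hε.trans_le (hebd (X ω)).1)]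
    linarith [(hebd (X ω)).2, hε]
  -- indicator rewrites
  have hind1 : ∀ ω, (if Z ω = 1 then (1:ℝ) else 0) = Z ω := by
    intro ω; rcases hZ01 ω with h | h <;> simp [h]
  have hind0 : ∀ ω, (if Z ω = 0 then (1:ℝ) else 0) = 1 - Z ω := by
    intro ω; rcases hZ01 ω with h | h <;> simp [h]
  have hm1v' : ∀ g : S → ℝ, Measurable g → (∃ Cg, ∀ x, |g x| ≤ Cg) →
      ∫ ω, Y ω * Z ω * g (X ω) ∂P = ∫ ω, m1 (X ω) * Z ω * g (X ω) ∂P := by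
    intro g hg hgb; simpa only [hind1] using hm1v g hg hgb
  have hm0v' : ∀ g : S → ℝ, Measurable g → (∃ Cg, ∀ x, |g x| ≤ Cg) →
      ∫ ω, Y ω * (1 - Z ω) * g (X ω) ∂P = ∫ ω, m0 (X ω) * (1 - Z ω) * g (X ω) ∂P := by
    intro g hg hgb; simpa only [hind0] using hm0v g hg hgb
  have hl1v' : ∀ g : S → ℝ, Measurable g → (∃ Cg, ∀ x, |g x| ≤ Cg) →
      ∫ ω, A ω * Z ω * g (X ω) ∂P = ∫ ω, l1 (X ω) * Z ω * g (X ω) ∂P := by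
    intro g hg hgb; simpa only [hind1] using hl1v g hg hgb
  have hl0v' : ∀ g : S → ℝ, Measurable g → (∃ Cg, ∀ x, |g x| ≤ Cg) →
      ∫ ω, A ω * (1 - Z ω) * g (X ω) ∂P = ∫ ω, l0 (X ω) * (1 - Z ω) * g (X ω) ∂P := by
    intro g hg hgb; simpa only [hind0] using hl0v g hg hgb
  -- clamps
  set cl01 : ℝ → ℝ := fun t => max 0 (min 1 t) with hcl01
  set clC : ℝ → ℝ := fun t => max (-C) (min C t) with hclC
  have hcl01m : Measurable cl01 :=
    (continuous_const.max (continuous_const.min continuous_id)).measurable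
  have hclCm : Measurable clC :=
    (continuous_const.max (continuous_const.min continuous_id)).measurable
  have hcl01v : ∀ t : ℝ, t = 0 ∨ t = 1 → cl01 t = t := by
    rintro t (rfl | rfl) <;> simp [hcl01]
  have hclCv : ∀ t : ℝ, |t| ≤ C → clC t = t := by
    intro t ht
    simp only [hclC]
    rw [min_eq_right (le_trans (le_abs_self t) ht),
      max_eq_right (by linarith [neg_abs_le t])]
  have hcl01b1 : ∀ t, 0 ≤ cl01 t := by intro t; simp only [hcl01]; exact le_max_left _ _
  have hcl01b2 : ∀ t, cl01 t ≤ 1 := by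
    intro t; simp only [hcl01]; exact max_le zero_le_one (min_le_left _ _)
  have hcl01b : ∀ t, |cl01 t| ≤ 1 := by
    intro t; rw [abs_of_nonneg (hcl01b1 t)]; exact hcl01b2 t
  have hcl01b' : ∀ t, |1 - cl01 t| ≤ 1 := by
    intro t
    have h1 := hcl01b1 t
    have h2 := hcl01b2 t
    rw [abs_le]; constructor <;> linarith
  have hclCb : ∀ t, |clC t| ≤ C := by
    intro t; simp only [hclC]; exact clate_abs_clamp_le_bound t hCpos.le
  -- ψ functions on ℝ⁴
  set ψ1 : ℝ × ℝ × ℝ × ℝ → ℝ :=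
    fun v => (1 - cl01 v.2.1) * clC v.2.2.1 + cl01 v.2.1 * clC v.2.2.2 with hψ1
  set ψ0 : ℝ × ℝ × ℝ × ℝ → ℝ :=
    fun v => (1 - cl01 v.1) * clC v.2.2.1 + cl01 v.1 * clC v.2.2.2 with hψ0
  set ψa1 : ℝ × ℝ × ℝ × ℝ → ℝ := fun v => cl01 v.2.1 with hψa1
  set ψa0 : ℝ × ℝ × ℝ × ℝ → ℝ := fun v => cl01 v.1 with hψa0
  have hp21 : Measurable fun v : ℝ × ℝ × ℝ × ℝ => v.2.1 :=
    measurable_fst.comp measurable_snd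
  have hp221 : Measurable fun v : ℝ × ℝ × ℝ × ℝ => v.2.2.1 :=
    measurable_fst.comp (measurable_snd.comp measurable_snd)
  have hp222 : Measurable fun v : ℝ × ℝ × ℝ × ℝ => v.2.2.2 :=
    measurable_snd.comp (measurable_snd.comp measurable_snd)
  have hψ1m : Measurable ψ1 := by
    rw [hψ1]
    exact ((measurable_const.sub (hcl01m.comp hp21)).mul (hclCm.comp hp221)).add
      ((hcl01m.comp hp21).mul (hclCm.comp hp222))
  have hψ0m : Measurable ψ0 := by
    rw [hψ0]
    exact ((measurable_const.sub (hcl01m.comp measurable_fst)).mul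
      (hclCm.comp hp221)).add ((hcl01m.comp measurable_fst).mul (hclCm.comp hp222))
  have hψa1m : Measurable ψa1 := by rw [hψa1]; exact hcl01m.comp hp21
  have hψa0m : Measurable ψa0 := by rw [hψa0]; exact hcl01m.comp measurable_fst
  have hψ1b : ∀ v, |ψ1 v| ≤ 2 * C := by
    intro v
    simp only [hψ1]
    calc |(1 - cl01 v.2.1) * clC v.2.2.1 + cl01 v.2.1 * clC v.2.2.2|
        ≤ |(1 - cl01 v.2.1) * clC v.2.2.1| + |cl01 v.2.1 * clC v.2.2.2| := abs_add_le _ _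
      _ ≤ 1 * C + 1 * C := by
          rw [abs_mul, abs_mul]
          exact add_le_add
            (mul_le_mul (hcl01b' _) (hclCb _) (abs_nonneg _) zero_le_one)
            (mul_le_mul (hcl01b _) (hclCb _) (abs_nonneg _) zero_le_one)
      _ = 2 * C := by ring
  have hψ0b : ∀ v, |ψ0 v| ≤ 2 * C := by
    intro v
    simp only [hψ0]
    calc |(1 - cl01 v.1) * clC v.2.2.1 + cl01 v.1 * clC v.2.2.2|
        ≤ |(1 - cl01 v.1) * clC v.2.2.1| + |cl01 v.1 * clC v.2.2.2| := abs_add_le _ _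
      _ ≤ 1 * C + 1 * C := by
          rw [abs_mul, abs_mul]
          exact add_le_add
            (mul_le_mul (hcl01b' _) (hclCb _) (abs_nonneg _) zero_le_one)
            (mul_le_mul (hcl01b _) (hclCb _) (abs_nonneg _) zero_le_one)
      _ = 2 * C := by ring
  have hψa1b : ∀ v, |ψa1 v| ≤ 1 := by intro v; rw [hψa1]; exact hcl01b _
  have hψa0b : ∀ v, |ψa0 v| ≤ 1 := by intro v; rw [hψa0]; exact hcl01b _
  -- values on realized data
  have hψ1v : ∀ ω, ψ1 (A0 ω, A1 ω, Y0 ω, Y1 ω) = (1 - A1 ω) * Y0 ω + A1 ω * Y1 ω := by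
    intro ω
    simp only [hψ1]
    rw [hcl01v _ (hA1_01 ω), hclCv _ (hY0C ω), hclCv _ (hY1C ω)]
  have hψ0v : ∀ ω, ψ0 (A0 ω, A1 ω, Y0 ω, Y1 ω) = (1 - A0 ω) * Y0 ω + A0 ω * Y1 ω := by
    intro ω
    simp only [hψ0]
    rw [hcl01v _ (hA0_01 ω), hclCv _ (hY0C ω), hclCv _ (hY1C ω)]
  have hψa1v : ∀ ω, ψa1 (A0 ω, A1 ω, Y0 ω, Y1 ω) = A1 ω := by
    intro ω; simp only [hψa1]; exact hcl01v _ (hA1_01 ω)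
  have hψa0v : ∀ ω, ψa0 (A0 ω, A1 ω, Y0 ω, Y1 ω) = A0 ω := by
    intro ω; simp only [hψa0]; exact hcl01v _ (hA0_01 ω)
  -- unconfoundedness with Z
  have hUn1 : ∀ g : S → ℝ, Measurable g → (∃ Cg, ∀ x, |g x| ≤ Cg) →
      ∫ ω, Z ω * ((1 - A1 ω) * Y0 ω + A1 ω * Y1 ω) * g (X ω) ∂P
        = ∫ ω, e (X ω) * ((1 - A1 ω) * Y0 ω + A1 ω * Y1 ω) * g (X ω) ∂P := by
    intro g hg hgb
    simpa only [hψ1v] using hUnconf ψ1 hψ1m ⟨2 * C, hψ1b⟩ g hg hgb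
  have hUn0z : ∀ g : S → ℝ, Measurable g → (∃ Cg, ∀ x, |g x| ≤ Cg) →
      ∫ ω, Z ω * ((1 - A0 ω) * Y0 ω + A0 ω * Y1 ω) * g (X ω) ∂P
        = ∫ ω, e (X ω) * ((1 - A0 ω) * Y0 ω + A0 ω * Y1 ω) * g (X ω) ∂P := by
    intro g hg hgb
    simpa only [hψ0v] using hUnconf ψ0 hψ0m ⟨2 * C, hψ0b⟩ g hg hgb
  have hUnA1 : ∀ g : S → ℝ, Measurable g → (∃ Cg, ∀ x, |g x| ≤ Cg) →
      ∫ ω, Z ω * A1 ω * g (X ω) ∂P = ∫ ω, e (X ω) * A1 ω * g (X ω) ∂P := by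
    intro g hg hgb
    simpa only [hψa1v] using hUnconf ψa1 hψa1m ⟨1, hψa1b⟩ g hg hgb
  have hUnA0z : ∀ g : S → ℝ, Measurable g → (∃ Cg, ∀ x, |g x| ≤ Cg) →
      ∫ ω, Z ω * A0 ω * g (X ω) ∂P = ∫ ω, e (X ω) * A0 ω * g (X ω) ∂P := by
    intro g hg hgb
    simpa only [hψa0v] using hUnconf ψa0 hψa0m ⟨1, hψa0b⟩ g hg hgb
  -- from Z-identities to (1-Z)-identities
  have honemz : ∀ V : Ω → ℝ, Measurable V → ∀ Cv : ℝ, (∀ ω, |V ω| ≤ Cv) →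
      (∀ g : S → ℝ, Measurable g → (∃ Cg, ∀ x, |g x| ≤ Cg) →
        ∫ ω, Z ω * V ω * g (X ω) ∂P = ∫ ω, e (X ω) * V ω * g (X ω) ∂P) →
      ∀ g : S → ℝ, Measurable g → (∃ Cg, ∀ x, |g x| ≤ Cg) →
        ∫ ω, (1 - Z ω) * V ω * g (X ω) ∂P
          = ∫ ω, (1 - e (X ω)) * V ω * g (X ω) ∂P := by
    intro V hV Cv hVb hZV g hg hgb
    obtain ⟨Cg, hCg⟩ := hgb
    have hCv0 : 0 ≤ Cv := (abs_nonneg _).trans (hVb (Classical.arbitrary Ω))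
    have hVgb : ∀ ω, |V ω * g (X ω)| ≤ Cv * Cg := by
      intro ω
      rw [abs_mul]
      exact mul_le_mul (hVb ω) (hCg _) (abs_nonneg _) hCv0
    have hVgm : Measurable fun ω => V ω * g (X ω) := hV.mul (hg.comp hX)
    have i1 : Integrable (fun ω => V ω * g (X ω)) P := clate_intble hVgm hVgb
    have i2 : Integrable (fun ω => Z ω * (V ω * g (X ω))) P := by
      refine clate_intble (hZ.mul hVgm) (C := 1 * (Cv * Cg)) fun ω => ?_
      rw [abs_mul]
      exact mul_le_mul (hZb ω) (hVgb ω) (abs_nonneg _) zero_le_one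
    have i3 : Integrable (fun ω => e (X ω) * (V ω * g (X ω))) P := by
      refine clate_intble ((he.comp hX).mul hVgm) (C := 1 * (Cv * Cg)) fun ω => ?_
      rw [abs_mul]
      exact mul_le_mul (heXb ω) (hVgb ω) (abs_nonneg _) zero_le_one
    have eZ : ∫ ω, Z ω * (V ω * g (X ω)) ∂P = ∫ ω, e (X ω) * (V ω * g (X ω)) ∂P := by
      calc ∫ ω, Z ω * (V ω * g (X ω)) ∂P = ∫ ω, Z ω * V ω * g (X ω) ∂P := by
            congr 1; funext ω; ring
        _ = ∫ ω, e (X ω) * V ω * g (X ω) ∂P := hZV g hg ⟨Cg, hCg⟩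
        _ = ∫ ω, e (X ω) * (V ω * g (X ω)) ∂P := by congr 1; funext ω; ring
    calc ∫ ω, (1 - Z ω) * V ω * g (X ω) ∂P
        = ∫ ω, (V ω * g (X ω) - Z ω * (V ω * g (X ω))) ∂P := by
          congr 1; funext ω; ring
      _ = (∫ ω, V ω * g (X ω) ∂P) - ∫ ω, Z ω * (V ω * g (X ω)) ∂P := integral_sub i1 i2
      _ = (∫ ω, V ω * g (X ω) ∂P) - ∫ ω, e (X ω) * (V ω * g (X ω)) ∂P := by rw [eZ]
      _ = ∫ ω, (V ω * g (X ω) - e (X ω) * (V ω * g (X ω))) ∂P :=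
          (integral_sub i1 i3).symm
      _ = ∫ ω, (1 - e (X ω)) * V ω * g (X ω) ∂P := by congr 1; funext ω; ring
  have hVe1 : ∀ g : S → ℝ, Measurable g → (∃ Cg, ∀ x, |g x| ≤ Cg) →
      ∫ ω, (1 - Z ω) * g (X ω) ∂P = ∫ ω, (1 - e (X ω)) * g (X ω) ∂P := by
    intro g hg hgb
    have hZ1 : ∀ g' : S → ℝ, Measurable g' → (∃ Cg, ∀ x, |g' x| ≤ Cg) →
        ∫ ω, Z ω * (fun _ : Ω => (1:ℝ)) ω * g' (X ω) ∂P
          = ∫ ω, e (X ω) * (fun _ : Ω => (1:ℝ)) ω * g' (X ω) ∂P := by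
      intro g' hg' hgb'
      simpa only [mul_one] using hVe g' hg' hgb'
    simpa only [mul_one] using
      honemz (fun _ => 1) measurable_const 1 (fun ω => by norm_num) hZ1 g hg hgb
  have hUn0 := honemz (fun ω => (1 - A0 ω) * Y0 ω + A0 ω * Y1 ω)
    (((measurable_const.sub hA0).mul hY0).add (hA0.mul hY1)) (2 * C)
    (fun ω => by
      rcases hA0_01 ω with h | h <;> simp [h] <;>
        linarith [hY0C ω, hY1C ω, hCpos]) hUn0z
  have hUnA0 := honemz (fun ω => A0 ω) hA0 1
    (fun ω => by rcases hA0_01 ω with h | h <;> simp [h]) hUnA0z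
  -- exclusion-restriction identities
  have hWR1 : ∀ ω, Z ω * Y ω = Z ω * ((1 - A1 ω) * Y0 ω + A1 ω * Y1 ω) := by
    intro ω
    rcases hZ01 ω with h | h <;> simp only [hY, hA, h] <;> ring
  have hWR0 : ∀ ω, (1 - Z ω) * Y ω = (1 - Z ω) * ((1 - A0 ω) * Y0 ω + A0 ω * Y1 ω) := by
    intro ω
    rcases hZ01 ω with h | h <;> simp only [hY, hA, h] <;> ring
  have hWRA1 : ∀ ω, Z ω * A ω = Z ω * A1 ω := by
    intro ω
    rcases hZ01 ω with h | h <;> simp only [hA, h] <;> ring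
  have hWRA0 : ∀ ω, (1 - Z ω) * A ω = (1 - Z ω) * A0 ω := by
    intro ω
    rcases hZ01 ω with h | h <;> simp only [hA, h] <;> ring
  -- master instantiations
  have hebd1 : ∀ x, ε ≤ e x ∧ e x ≤ 1 :=
    fun x => ⟨(hebd x).1, (hebd x).2.trans (by linarith)⟩
  have hebd0 : ∀ x, ε ≤ 1 - e x ∧ 1 - e x ≤ 1 :=
    fun x => ⟨by linarith [(hebd x).2], by linarith [(hebd x).1, hε]⟩
  have M1 := clate_master P X hX Z hZ hZb e he ε hε hebd1 hVe
    (fun ω => (1 - A1 ω) * Y0 ω + A1 ω * Y1 ω)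
    (((measurable_const.sub hA1).mul hY0).add (hA1.mul hY1)) hUn1
    Y hYm C hYb hWR1 m1 hm1 hm1v'
  have M0 := clate_master P X hX (fun ω => 1 - Z ω) (measurable_const.sub hZ) h1Zb
    (fun x => 1 - e x) (measurable_const.sub he) ε hε hebd0 hVe1
    (fun ω => (1 - A0 ω) * Y0 ω + A0 ω * Y1 ω)
    (((measurable_const.sub hA0).mul hY0).add (hA0.mul hY1)) hUn0
    Y hYm C hYb hWR0 m0 hm0 hm0v'
  have ML1 := clate_master P X hX Z hZ hZb e he ε hε hebd1 hVe
    (fun ω => A1 ω) hA1 hUnA1 A hAm 1 hAb hWRA1 l1 hl1 hl1v'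
  have ML0 := clate_master P X hX (fun ω => 1 - Z ω) (measurable_const.sub hZ) h1Zb
    (fun x => 1 - e x) (measurable_const.sub he) ε hε hebd0 hVe1
    (fun ω => A0 ω) hA0 hUnA0 A hAm 1 hAb hWRA0 l0 hl0 hl0v'
  -- a.e. monotonicity
  have haeM : ∀ᵐ ω ∂P, A0 ω ≤ A1 ω := by
    have hms : MeasurableSet {ω | A0 ω ≤ A1 ω} := measurableSet_le hA0 hA1
    rw [ae_iff]
    have hcompl : {ω | ¬A0 ω ≤ A1 ω} = {ω | A0 ω ≤ A1 ω}ᶜ := rfl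
    rw [hcompl, measure_compl hms (measure_ne_top P _), hMono, measure_univ, tsub_self]
  -- measurable event of compliance
  have hset : MeasurableSet {ω | A1 ω = 1 ∧ A0 ω = 0} := by
    have hrw : {ω | A1 ω = 1 ∧ A0 ω = 0} = A1 ⁻¹' {1} ∩ A0 ⁻¹' {0} := rfl
    rw [hrw]
    exact (hA1 (measurableSet_singleton 1)).inter (hA0 (measurableSet_singleton 0))
  -- key integral identities
  have key1 : ∀ g : S → ℝ, Measurable g → (∃ Cg, ∀ x, |g x| ≤ Cg) →
      ∫ ω, (m1 (X ω) - m0 (X ω)) * g (X ω) ∂P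
        = ∫ ω, Set.indicator {ω | A1 ω = 1 ∧ A0 ω = 0}
            (fun ω => Y1 ω - Y0 ω) ω * g (X ω) ∂P := by
    intro g hg hgb
    obtain ⟨Cg, hCg⟩ := hgb
    have hCg0 : 0 ≤ Cg := (abs_nonneg _).trans (hCg (X (Classical.arbitrary Ω)))
    have hgX : Measurable fun ω => g (X ω) := hg.comp hX
    have i1 : Integrable (fun ω => m1 (X ω) * g (X ω)) P :=
      clate_int_mul M1.1 hgX fun ω => hCg (X ω)
    have i0 : Integrable (fun ω => m0 (X ω) * g (X ω)) P :=
      clate_int_mul M0.1 hgX fun ω => hCg (X ω)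
    have hb1 : ∀ ω, |((1 - A1 ω) * Y0 ω + A1 ω * Y1 ω) * g (X ω)| ≤ 2 * C * Cg := by
      intro ω
      rw [abs_mul]
      refine mul_le_mul ?_ (hCg _) (abs_nonneg _) (by positivity)
      have := hψ1b (A0 ω, A1 ω, Y0 ω, Y1 ω)
      rwa [hψ1v ω] at this
    have hb0 : ∀ ω, |((1 - A0 ω) * Y0 ω + A0 ω * Y1 ω) * g (X ω)| ≤ 2 * C * Cg := by
      intro ω
      rw [abs_mul]
      refine mul_le_mul ?_ (hCg _) (abs_nonneg _) (by positivity)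
      have := hψ0b (A0 ω, A1 ω, Y0 ω, Y1 ω)
      rwa [hψ0v ω] at this
    have iψ1 : Integrable (fun ω => ((1 - A1 ω) * Y0 ω + A1 ω * Y1 ω) * g (X ω)) P :=
      clate_intble ((((measurable_const.sub hA1).mul hY0).add (hA1.mul hY1)).mul hgX) hb1
    have iψ0 : Integrable (fun ω => ((1 - A0 ω) * Y0 ω + A0 ω * Y1 ω) * g (X ω)) P :=
      clate_intble ((((measurable_const.sub hA0).mul hY0).add (hA0.mul hY1)).mul hgX) hb0
    calc ∫ ω, (m1 (X ω) - m0 (X ω)) * g (X ω) ∂P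
        = ∫ ω, (m1 (X ω) * g (X ω) - m0 (X ω) * g (X ω)) ∂P := by
          congr 1; funext ω; ring
      _ = (∫ ω, m1 (X ω) * g (X ω) ∂P) - ∫ ω, m0 (X ω) * g (X ω) ∂P :=
          integral_sub i1 i0
      _ = (∫ ω, ((1 - A1 ω) * Y0 ω + A1 ω * Y1 ω) * g (X ω) ∂P)
          - ∫ ω, ((1 - A0 ω) * Y0 ω + A0 ω * Y1 ω) * g (X ω) ∂P := by
          rw [M1.2 g hg ⟨Cg, hCg⟩, M0.2 g hg ⟨Cg, hCg⟩]
      _ = ∫ ω, (((1 - A1 ω) * Y0 ω + A1 ω * Y1 ω) * g (X ω)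
          - ((1 - A0 ω) * Y0 ω + A0 ω * Y1 ω) * g (X ω)) ∂P :=
          (integral_sub iψ1 iψ0).symm
      _ = ∫ ω, Set.indicator {ω | A1 ω = 1 ∧ A0 ω = 0}
            (fun ω => Y1 ω - Y0 ω) ω * g (X ω) ∂P := by
          refine integral_congr_ae ?_
          filter_upwards [haeM] with ω hle
          rcases hA0_01 ω with h0 | h0 <;> rcases hA1_01 ω with h1 | h1
          · have hmem : ω ∉ {ω | A1 ω = 1 ∧ A0 ω = 0} := by
              intro hc; simp only [Set.mem_setOf_eq] at hc; rw [h1] at hc; exact zero_ne_one hc.1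
            rw [Set.indicator_of_notMem hmem, h0, h1]; ring
          · have hmem : ω ∈ {ω | A1 ω = 1 ∧ A0 ω = 0} := Set.mem_setOf_eq ▸ ⟨h1, h0⟩
            rw [Set.indicator_of_mem hmem, h0, h1]; ring
          · exfalso; rw [h0, h1] at hle; linarith
          · have hmem : ω ∉ {ω | A1 ω = 1 ∧ A0 ω = 0} := by
              intro hc; simp only [Set.mem_setOf_eq] at hc; rw [h0] at hc; exact one_ne_zero hc.2
            rw [Set.indicator_of_notMem hmem, h0, h1]; ring
  have key2 : ∀ g : S → ℝ, Measurable g → (∃ Cg, ∀ x, |g x| ≤ Cg) →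
      ∫ ω, (l1 (X ω) - l0 (X ω)) * g (X ω) ∂P
        = ∫ ω, Set.indicator {ω | A1 ω = 1 ∧ A0 ω = 0}
            (fun _ => (1:ℝ)) ω * g (X ω) ∂P := by
    intro g hg hgb
    obtain ⟨Cg, hCg⟩ := hgb
    have hCg0 : 0 ≤ Cg := (abs_nonneg _).trans (hCg (X (Classical.arbitrary Ω)))
    have hgX : Measurable fun ω => g (X ω) := hg.comp hX
    have i1 : Integrable (fun ω => l1 (X ω) * g (X ω)) P :=
      clate_int_mul ML1.1 hgX fun ω => hCg (X ω)
    have i0 : Integrable (fun ω => l0 (X ω) * g (X ω)) P :=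
      clate_int_mul ML0.1 hgX fun ω => hCg (X ω)
    have hb1 : ∀ ω, |A1 ω * g (X ω)| ≤ 1 * Cg := by
      intro ω
      rw [abs_mul]
      refine mul_le_mul ?_ (hCg _) (abs_nonneg _) zero_le_one
      rcases hA1_01 ω with h | h <;> simp [h]
    have hb0 : ∀ ω, |A0 ω * g (X ω)| ≤ 1 * Cg := by
      intro ω
      rw [abs_mul]
      refine mul_le_mul ?_ (hCg _) (abs_nonneg _) zero_le_one
      rcases hA0_01 ω with h | h <;> simp [h]
    have iψ1 : Integrable (fun ω => A1 ω * g (X ω)) P := clate_intble (hA1.mul hgX) hb1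
    have iψ0 : Integrable (fun ω => A0 ω * g (X ω)) P := clate_intble (hA0.mul hgX) hb0
    calc ∫ ω, (l1 (X ω) - l0 (X ω)) * g (X ω) ∂P
        = ∫ ω, (l1 (X ω) * g (X ω) - l0 (X ω) * g (X ω)) ∂P := by
          congr 1; funext ω; ring
      _ = (∫ ω, l1 (X ω) * g (X ω) ∂P) - ∫ ω, l0 (X ω) * g (X ω) ∂P :=
          integral_sub i1 i0
      _ = (∫ ω, A1 ω * g (X ω) ∂P) - ∫ ω, A0 ω * g (X ω) ∂P := by
          rw [ML1.2 g hg ⟨Cg, hCg⟩, ML0.2 g hg ⟨Cg, hCg⟩]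
      _ = ∫ ω, (A1 ω * g (X ω) - A0 ω * g (X ω)) ∂P := (integral_sub iψ1 iψ0).symm
      _ = ∫ ω, Set.indicator {ω | A1 ω = 1 ∧ A0 ω = 0}
            (fun _ => (1:ℝ)) ω * g (X ω) ∂P := by
          refine integral_congr_ae ?_
          filter_upwards [haeM] with ω hle
          rcases hA0_01 ω with h0 | h0 <;> rcases hA1_01 ω with h1 | h1
          · have hmem : ω ∉ {ω | A1 ω = 1 ∧ A0 ω = 0} := by
              intro hc; simp only [Set.mem_setOf_eq] at hc; rw [h1] at hc; exact zero_ne_one hc.1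
            rw [Set.indicator_of_notMem hmem, h0, h1]; ring
          · have hmem : ω ∈ {ω | A1 ω = 1 ∧ A0 ω = 0} := Set.mem_setOf_eq ▸ ⟨h1, h0⟩
            rw [Set.indicator_of_mem hmem, h0, h1]; ring
          · exfalso; rw [h0, h1] at hle; linarith
          · have hmem : ω ∉ {ω | A1 ω = 1 ∧ A0 ω = 0} := by
              intro hc; simp only [Set.mem_setOf_eq] at hc; rw [h0] at hc; exact one_ne_zero hc.2
            rw [Set.indicator_of_notMem hmem, h0, h1]; ring
  -- conclusion via conditional expectation characterization
  have hVm : Measurable fun ω => f (X ω) := hf.comp hX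
  have hle' : MeasurableSpace.comap (fun ω => f (X ω)) mT ≤ ‹MeasurableSpace Ω› :=
    hVm.comap_le
  have final : ∀ h1 h2 : Ω → ℝ, Integrable h1 P → Integrable h2 P →
      (∀ g : S → ℝ, Measurable g → (∃ Cg, ∀ x, |g x| ≤ Cg) →
        ∫ ω, h1 ω * g (X ω) ∂P = ∫ ω, h2 ω * g (X ω) ∂P) →
      P[h1 | MeasurableSpace.comap (fun ω => f (X ω)) mT]
        =ᵐ[P] P[h2 | MeasurableSpace.comap (fun ω => f (X ω)) mT] := by
    intro h1 h2 hi1 hi2 hkey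
    have hseq : ∀ s : Set Ω, MeasurableSet[MeasurableSpace.comap (fun ω => f (X ω)) mT] s →
        ∫ ω in s, h1 ω ∂P = ∫ ω in s, h2 ω ∂P := by
      intro s hs
      obtain ⟨B, hB, rfl⟩ := hs
      have hsm : MeasurableSet ((fun ω => f (X ω)) ⁻¹' B) := hVm hB
      have hgm : Measurable (Set.indicator (f ⁻¹' B) fun _ => (1:ℝ)) :=
        measurable_const.indicator (hf hB)
      have hgb : ∀ x, |Set.indicator (f ⁻¹' B) (fun _ => (1:ℝ)) x| ≤ 1 := by
        intro x
        rw [Set.indicator_apply]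
        split_ifs <;> simp
      have hrwint : ∀ h' : Ω → ℝ, ∫ ω in (fun ω => f (X ω)) ⁻¹' B, h' ω ∂P
          = ∫ ω, h' ω * Set.indicator (f ⁻¹' B) (fun _ => (1:ℝ)) (X ω) ∂P := by
        intro h'
        rw [← integral_indicator hsm]
        congr 1
        funext ω
        by_cases hω : ω ∈ (fun ω => f (X ω)) ⁻¹' B
        · have hx : X ω ∈ f ⁻¹' B := hω
          rw [Set.indicator_of_mem hω, Set.indicator_of_mem hx, mul_one]
        · have hx : X ω ∉ f ⁻¹' B := hω
          rw [Set.indicator_of_notMem hω, Set.indicator_of_notMem hx, mul_zero]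
      rw [hrwint h1, hrwint h2]
      exact hkey _ hgm ⟨1, hgb⟩
    exact ae_eq_condExp_of_forall_setIntegral_eq (μ := P) hle' hi2
      (fun s _ _ => integrable_condExp.integrableOn)
      (fun s hs _ => by rw [setIntegral_condExp hle' hi1 hs]; exact hseq s hs)
      (StronglyMeasurable.aestronglyMeasurable stronglyMeasurable_condExp)
  -- assemble
  have hindm1 : Integrable
      (Set.indicator {ω | A1 ω = 1 ∧ A0 ω = 0} fun ω => Y1 ω - Y0 ω) P := by
    refine clate_intble ((hY1.sub hY0).indicator hset) (C := 2 * C) fun ω => ?_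
    rw [Set.indicator_apply]
    split_ifs
    · have ha := abs_le.mp (hY1C ω)
      have hb := abs_le.mp (hY0C ω)
      rw [abs_le]; constructor <;> linarith
    · simp; positivity
  have hindm2 : Integrable
      (Set.indicator {ω | A1 ω = 1 ∧ A0 ω = 0} fun _ => (1:ℝ)) P := by
    refine clate_intble (measurable_const.indicator hset) (C := 1) fun ω => ?_
    rw [Set.indicator_apply]
    split_ifs <;> simp
  constructor
  · exact final (fun ω => m1 (X ω) - m0 (X ω)) _ (M1.1.sub M0.1) hindm1 key1
  · exact final (fun ω => l1 (X ω) - l0 (X ω)) _ (ML1.1.sub ML0.1) hindm2 key2
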